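/- Let Γ, Q¹ ∈ ℚ[[x₁,x₂,y₁,y₂]] and define G ∈ ℚ[[s,u,v,w]] by G := Γ(s,u+v,v,w). Assume: (i) Q¹_{x₁x₁} = Γ_{x₂y₁} − 2Γ_{y₂x₁} + Γ_{x₁}·Γ_{x₂x₁x₁} + (Γ_{y₁x₁} + Γ_{x₂})·(Γ_{x₁x₁x₁} + 2y₁Γ_{x₂x₁x₁}) + Γ_{y₁x₂}·(2y₁Γ_{x₁x₁x₁} + (2y₁²+2y₂)Γ_{x₂x₁x₁}) (the specialisation to X = P², k = 1, i = j = 1 of Proposition 2.3), and (ii) G_{wss} = G_{uu} + G_{us}·(L G_{ss}) + G_{uu}·(P G_{ss}) (equation (11) of the paper). Then after the substitution (x₁,x₂,y₁,y₂) = (s,u+v,v,w): Q¹_{x₁x₁} = G_{vu} − 2G_{ws} − G_{wss} + G_s·G_{uss} + G_u·(L G_{ss}) + G_{vs}·(L G_{ss}) + G_{vu}·(P G_{ss}). (This is the paper's Equation (Q1forP2).) -/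

import Mathlib

/-- Formal partial derivative of a multivariate power series with respect to the `i`-th
variable: the coefficient at a monomial `m` is `(m i + 1)` times the coefficient at
`m + eᵢ`. -/
noncomputable def pd {n : ℕ} (i : Fin n) (F : MvPowerSeries (Fin n) ℚ) :
    MvPowerSeries (Fin n) ℚ :=
  fun m => ((m i : ℚ) + 1) * MvPowerSeries.coeff (R := ℚ) (m + Finsupp.single i 1) F

/-- Substitution `(x₁,x₂,y₁,y₂) = (s, u+v, v, w)` turning a power series
`Γ ∈ ℚ[[x₁,x₂,y₁,y₂]]` into `Γ(s, u+v, v, w) ∈ ℚ[[s,u,v,w]]` (variables of the source are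
indexed `x₁,x₂,y₁,y₂ = 0,1,2,3` and of the target `s,u,v,w = 0,1,2,3`):  the coefficient at
`s^a u^b v^c w^d` is `∑_{k=0}^{c} binom(b+k, b) · (coeff of Γ at x₁^a x₂^{b+k} y₁^{c-k}
y₂^d)`, coming from the expansion of `(u+v)^{b+k}`. -/
noncomputable def substP2 (Γ : MvPowerSeries (Fin 4) ℚ) : MvPowerSeries (Fin 4) ℚ :=
  fun m => ∑ k ∈ Finset.range (m 2 + 1),
    (Nat.choose (m 1 + k) (m 1) : ℚ) *
      MvPowerSeries.coeff (R := ℚ)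
        (Finsupp.single 0 (m 0) + Finsupp.single 1 (m 1 + k) +
         Finsupp.single 2 (m 2 - k) + Finsupp.single 3 (m 3)) Γ

noncomputable def ι (a b c d : ℕ) : Fin 4 →₀ ℕ :=
  Finsupp.single 0 a + Finsupp.single 1 b + Finsupp.single 2 c + Finsupp.single 3 d

@[simp] lemma ι0 (a b c d : ℕ) : ι a b c d 0 = a := by simp [ι, Finsupp.single_apply]
@[simp] lemma ι1 (a b c d : ℕ) : ι a b c d 1 = b := by simp [ι, Finsupp.single_apply]
@[simp] lemma ι2 (a b c d : ℕ) : ι a b c d 2 = c := by simp [ι, Finsupp.single_apply]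
@[simp] lemma ι3 (a b c d : ℕ) : ι a b c d 3 = d := by simp [ι, Finsupp.single_apply]

lemma eq_ι (m : Fin 4 →₀ ℕ) : m = ι (m 0) (m 1) (m 2) (m 3) := by
  ext x; fin_cases x <;> simp [ι, Finsupp.single_apply]

lemma ι_add (a b c d a' b' c' d' : ℕ) :
    ι a b c d + ι a' b' c' d' = ι (a+a') (b+b') (c+c') (d+d') := by
  ext x; fin_cases x <;> simp [ι, Finsupp.single_apply]

lemma substP2_coeff (F : MvPowerSeries (Fin 4) ℚ) (m : Fin 4 →₀ ℕ) :
    substP2 F m = ∑ k ∈ Finset.range (m 2 + 1),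
      (Nat.choose (m 1 + k) (m 1) : ℚ) * F (ι (m 0) (m 1 + k) (m 2 - k) (m 3)) := rfl

lemma pd_comm {n : ℕ} (i j : Fin n) (F : MvPowerSeries (Fin n) ℚ) :
    pd i (pd j F) = pd j (pd i F) := by
  funext m
  simp only [pd, MvPowerSeries.coeff_apply, Finsupp.add_apply, Finsupp.single_apply]
  rcases eq_or_ne i j with h | h
  · subst h; ring_nf
  · rw [if_neg h, if_neg (Ne.symm h), add_right_comm]
    ring

lemma pd_coeff {n : ℕ} (i : Fin n) (F : MvPowerSeries (Fin n) ℚ) (m : Fin n →₀ ℕ) :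
    pd i F m = ((m i : ℚ) + 1) * F (m + Finsupp.single i 1) := rfl

lemma e1 : (Finsupp.single 1 1 : Fin 4 →₀ ℕ) = ι 0 1 0 0 := by
  ext x; fin_cases x <;> simp [ι, Finsupp.single_apply]
lemma e2 : (Finsupp.single 2 1 : Fin 4 →₀ ℕ) = ι 0 0 1 0 := by
  ext x; fin_cases x <;> simp [ι, Finsupp.single_apply]

lemma choose_id1 (b k : ℕ) :
    ((b:ℚ) + 1) * ((b + k + 1).choose (b+1) : ℚ) = ((b+k).choose b : ℚ) * (((b+k : ℕ):ℚ) + 1) := by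
  have h : (b + k + 1) * ((b+k).choose b) = ((b+k+1).choose (b+1)) * (b + 1) :=
    Nat.add_one_mul_choose_eq (b+k) b
  have hq := congrArg (Nat.cast : ℕ → ℚ) h
  push_cast at hq ⊢
  linear_combination -hq

lemma pd1_subst (F : MvPowerSeries (Fin 4) ℚ) :
    pd 1 (substP2 F) = substP2 (pd 1 F) := by
  funext m
  rw [pd_coeff, substP2_coeff, substP2_coeff, Finset.mul_sum]
  have h : m + Finsupp.single 1 1 = ι (m 0) (m 1 + 1) (m 2) (m 3) := by
    rw [eq_ι m, e1, ι_add]; simp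
  rw [h]
  refine Finset.sum_congr (by simp) fun k hk => ?_
  rw [pd_coeff]
  have h2 : ι (m 0) (m 1 + k) (m 2 - k) (m 3) + Finsupp.single 1 1
      = ι (m 0) (m 1 + k + 1) (m 2 - k) (m 3) := by rw [e1, ι_add]; simp
  rw [h2]
  simp only [ι0, ι1, ι2, ι3]
  have h3 : m 1 + 1 + k = m 1 + k + 1 := by omega
  rw [h3, ← mul_assoc, choose_id1 (m 1) k]
  ring

lemma choose_id2 (b k : ℕ) :
    (((b+k : ℕ):ℚ) + 1) * ((b+k).choose b : ℚ) = ((k:ℚ) + 1) * ((b+k+1).choose b : ℚ) := by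
  have hs : (b+k).choose b = (b+k).choose k := by
    have := Nat.choose_symm (Nat.le_add_left k b)
    simpa using this
  have hs2 : (b+k+1).choose b = (b+k+1).choose (k+1) := by
    have := Nat.choose_symm (show k+1 ≤ b+k+1 by omega)
    have h3 : b+k+1-(k+1) = b := by omega
    rw [h3] at this
    exact this
  have h : (b + k + 1) * ((b+k).choose k) = ((b+k+1).choose (k+1)) * (k + 1) :=
    Nat.add_one_mul_choose_eq (b+k) k
  have hq := congrArg (Nat.cast : ℕ → ℚ) h
  rw [hs, hs2]
  push_cast at hq ⊢
  linear_combination hq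

lemma pd2_subst (F : MvPowerSeries (Fin 4) ℚ) :
    pd 2 (substP2 F) = substP2 (pd 1 F) + substP2 (pd 2 F) := by
  funext m
  have hadd : (substP2 (pd 1 F) + substP2 (pd 2 F)) m
      = substP2 (pd 1 F) m + substP2 (pd 2 F) m := rfl
  rw [hadd, pd_coeff, substP2_coeff, substP2_coeff, substP2_coeff]
  have h : m + Finsupp.single 2 1 = ι (m 0) (m 1) (m 2 + 1) (m 3) := by
    rw [eq_ι m, e2, ι_add]; simp
  rw [h]
  simp only [ι0, ι1, ι2, ι3]
  set f : ℕ → ℚ := fun k => ((m 1 + k).choose (m 1) : ℚ) * F (ι (m 0) (m 1 + k) (m 2 + 1 - k) (m 3)) with hf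
  have hL : ∑ k ∈ Finset.range (m 2 + 1 + 1),
      ((m 1 + k).choose (m 1) : ℚ) * F (ι (m 0) (m 1 + k) (m 2 + 1 - k) (m 3))
      = ∑ k ∈ Finset.range (m 2 + 2), f k := by
    rfl
  have hS1 : ∑ k ∈ Finset.range (m 2 + 1),
      ((m 1 + k).choose (m 1) : ℚ) * pd 1 F (ι (m 0) (m 1 + k) (m 2 - k) (m 3))
      = ∑ k ∈ Finset.range (m 2 + 1), ((k:ℚ) + 1) * f (k+1) := by
    refine Finset.sum_congr rfl fun k hk => ?_
    rw [pd_coeff]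
    have hι : ι (m 0) (m 1 + k) (m 2 - k) (m 3) + Finsupp.single 1 1
        = ι (m 0) (m 1 + k + 1) (m 2 - k) (m 3) := by rw [e1, ι_add]; simp
    rw [hι]
    simp only [ι0, ι1, ι2, ι3, hf]
    have h1 : m 1 + (k+1) = m 1 + k + 1 := by omega
    have h2 : m 2 + 1 - (k+1) = m 2 - k := by omega
    rw [h1, h2, ← mul_assoc, mul_comm (((m 1 + k).choose (m 1) : ℚ)) ((↑(m 1 + k) + 1)),
      choose_id2 (m 1) k]
    ring
  have hS2 : ∑ k ∈ Finset.range (m 2 + 1),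
      ((m 1 + k).choose (m 1) : ℚ) * pd 2 F (ι (m 0) (m 1 + k) (m 2 - k) (m 3))
      = ∑ k ∈ Finset.range (m 2 + 1), ((m 2 : ℚ) + 1 - (k:ℚ)) * f k := by
    refine Finset.sum_congr rfl fun k hk => ?_
    rw [pd_coeff]
    have hkle : k ≤ m 2 := by
      have := Finset.mem_range.mp hk; omega
    have hι : ι (m 0) (m 1 + k) (m 2 - k) (m 3) + Finsupp.single 2 1
        = ι (m 0) (m 1 + k) (m 2 + 1 - k) (m 3) := by
      rw [e2, ι_add]
      have : m 2 - k + 1 = m 2 + 1 - k := by omega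
      simp [this]
    rw [hι]
    simp only [ι0, ι1, ι2, ι3, hf]
    have hc : ((m 2 - k : ℕ) : ℚ) = (m 2 : ℚ) - (k : ℚ) := by
      rw [Nat.cast_sub hkle]
    rw [hc]
    ring
  rw [hL, hS1, hS2]
  have hA : ∑ k ∈ Finset.range (m 2 + 1), ((k:ℚ) + 1) * f (k+1)
      = ∑ k ∈ Finset.range (m 2 + 2), (k:ℚ) * f k := by
    rw [Finset.sum_range_succ' (fun k => (k:ℚ) * f k) (m 2 + 1)]
    push_cast
    simp
  have hB : ∑ k ∈ Finset.range (m 2 + 2), ((m 2 : ℚ) + 1 - (k:ℚ)) * f k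
      = ∑ k ∈ Finset.range (m 2 + 1), ((m 2 : ℚ) + 1 - (k:ℚ)) * f k := by
    rw [Finset.sum_range_succ]
    push_cast
    ring
  rw [hA, ← hB, ← Finset.sum_add_distrib, Finset.mul_sum]
  refine Finset.sum_congr rfl fun k hk => ?_
  ring

lemma choose_symm_add' (a b : ℕ) : (a+b).choose a = (a+b).choose b := by
  have := Nat.choose_symm (Nat.le_add_left b a)
  simpa using this

lemma ι_inj {a b c d a' b' c' d' : ℕ} (h : ι a b c d = ι a' b' c' d') :
    a = a' ∧ b = b' ∧ c = c' ∧ d = d' :=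
  ⟨by rw [← ι0 a b c d, h, ι0], by rw [← ι1 a b c d, h, ι1],
   by rw [← ι2 a b c d, h, ι2], by rw [← ι3 a b c d, h, ι3]⟩

lemma substP2_mul (F G : MvPowerSeries (Fin 4) ℚ) :
    substP2 (F * G) = substP2 F * substP2 G := by
  classical
  funext m
  have hcoe : ∀ (H K : MvPowerSeries (Fin 4) ℚ) (n : Fin 4 →₀ ℕ),
      (H * K) n = ∑ p ∈ Finset.HasAntidiagonal.antidiagonal n, H p.1 * K p.2 := fun H K n =>
    MvPowerSeries.coeff_mul n H K
  rw [substP2_coeff, hcoe]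
  have hLHS : ∑ k ∈ Finset.range (m 2 + 1),
      ((m 1 + k).choose (m 1) : ℚ) * (F * G) (ι (m 0) (m 1 + k) (m 2 - k) (m 3))
      = ∑ k ∈ Finset.range (m 2 + 1),
        ∑ p ∈ Finset.HasAntidiagonal.antidiagonal (ι (m 0) (m 1 + k) (m 2 - k) (m 3)),
          ∑ ij ∈ Finset.HasAntidiagonal.antidiagonal k,
            ((p.1 1).choose ij.1 : ℚ) * ((p.2 1).choose ij.2 : ℚ) * (F p.1 * G p.2) := by
    refine Finset.sum_congr rfl fun k hk => ?_
    rw [hcoe, Finset.mul_sum]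
    refine Finset.sum_congr rfl fun p hp => ?_
    have hp' : p.1 + p.2 = ι (m 0) (m 1 + k) (m 2 - k) (m 3) :=
      Finset.HasAntidiagonal.mem_antidiagonal.mp hp
    have h1 : p.1 1 + p.2 1 = m 1 + k := by
      have := DFunLike.congr_fun hp' 1
      simpa [Finsupp.add_apply] using this
    have hv : ((m 1 + k).choose (m 1) : ℚ)
        = ∑ ij ∈ Finset.HasAntidiagonal.antidiagonal k,
            ((p.1 1).choose ij.1 : ℚ) * ((p.2 1).choose ij.2 : ℚ) := by
      rw [choose_symm_add' (m 1) k, ← h1, Nat.add_choose_eq]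
      push_cast
      rfl
    rw [hv, Finset.sum_mul]
  rw [hLHS]
  -- flatten LHS to a sigma sum
  have hflat : ∑ x ∈ (Finset.range (m 2 + 1)).sigma (fun k =>
            (Finset.HasAntidiagonal.antidiagonal (ι (m 0) (m 1 + k) (m 2 - k) (m 3))).sigma
              (fun _ => Finset.HasAntidiagonal.antidiagonal k)),
          ((x.2.1.1 1).choose x.2.2.1 : ℚ) * ((x.2.1.2 1).choose x.2.2.2 : ℚ)
            * (F x.2.1.1 * G x.2.1.2)
      = ∑ k ∈ Finset.range (m 2 + 1),
      ∑ p ∈ Finset.HasAntidiagonal.antidiagonal (ι (m 0) (m 1 + k) (m 2 - k) (m 3)),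
        ∑ ij ∈ Finset.HasAntidiagonal.antidiagonal k,
          ((p.1 1).choose ij.1 : ℚ) * ((p.2 1).choose ij.2 : ℚ) * (F p.1 * G p.2) := by
    rw [Finset.sum_sigma]
    refine Finset.sum_congr rfl fun k hk => ?_
    rw [Finset.sum_sigma]
  rw [← hflat]
  -- RHS into sigma sum
  have hRHS : ∀ ab : (Fin 4 →₀ ℕ) × (Fin 4 →₀ ℕ),
      substP2 F ab.1 * substP2 G ab.2
      = ∑ ij ∈ Finset.range (ab.1 2 + 1) ×ˢ Finset.range (ab.2 2 + 1),
          ((ab.1 1 + ij.1).choose (ab.1 1) : ℚ)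
              * F (ι (ab.1 0) (ab.1 1 + ij.1) (ab.1 2 - ij.1) (ab.1 3))
            * (((ab.2 1 + ij.2).choose (ab.2 1) : ℚ)
              * G (ι (ab.2 0) (ab.2 1 + ij.2) (ab.2 2 - ij.2) (ab.2 3))) := by
    intro ab
    rw [substP2_coeff, substP2_coeff, Finset.sum_mul_sum, ← Finset.sum_product']
  have hRHS2 : ∑ y ∈ (Finset.HasAntidiagonal.antidiagonal m).sigma (fun ab =>
            Finset.range (ab.1 2 + 1) ×ˢ Finset.range (ab.2 2 + 1)),
          ((y.1.1 1 + y.2.1).choose (y.1.1 1) : ℚ)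
              * F (ι (y.1.1 0) (y.1.1 1 + y.2.1) (y.1.1 2 - y.2.1) (y.1.1 3))
            * (((y.1.2 1 + y.2.2).choose (y.1.2 1) : ℚ)
              * G (ι (y.1.2 0) (y.1.2 1 + y.2.2) (y.1.2 2 - y.2.2) (y.1.2 3)))
      = ∑ ab ∈ Finset.HasAntidiagonal.antidiagonal m, substP2 F ab.1 * substP2 G ab.2 := by
    rw [Finset.sum_sigma]
    exact Finset.sum_congr rfl fun ab _ => (hRHS ab).symm
  rw [← hRHS2]
  refine Finset.sum_bij_ne_zero
    (i := fun x _ _ =>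
      ⟨(ι (x.2.1.1 0) (x.2.1.1 1 - x.2.2.1) (x.2.1.1 2 + x.2.2.1) (x.2.1.1 3),
        ι (x.2.1.2 0) (x.2.1.2 1 - x.2.2.2) (x.2.1.2 2 + x.2.2.2) (x.2.1.2 3)),
       (x.2.2.1, x.2.2.2)⟩)
    ?_ ?_ ?_ ?_
  · -- membership
    rintro ⟨k, ⟨⟨p, q⟩, ⟨i, j⟩⟩⟩ h₁ h₂
    simp only [Finset.mem_sigma, Finset.mem_range, Finset.HasAntidiagonal.mem_antidiagonal] at h₁
    obtain ⟨hk, hpq, hij⟩ := h₁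
    have hip : i ≤ p 1 := by
      by_contra hlt
      push_neg at hlt
      simp [Nat.choose_eq_zero_of_lt hlt] at h₂
    have hjq : j ≤ q 1 := by
      by_contra hlt
      push_neg at hlt
      simp [Nat.choose_eq_zero_of_lt hlt] at h₂
    have hc0 : p 0 + q 0 = m 0 := by simpa using DFunLike.congr_fun hpq 0
    have hc1 : p 1 + q 1 = m 1 + k := by simpa using DFunLike.congr_fun hpq 1
    have hc2 : p 2 + q 2 = m 2 - k := by simpa using DFunLike.congr_fun hpq 2
    have hc3 : p 3 + q 3 = m 3 := by simpa using DFunLike.congr_fun hpq 3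
    simp only [Finset.mem_sigma, Finset.HasAntidiagonal.mem_antidiagonal, Finset.mem_product,
      Finset.mem_range, ι0, ι1, ι2, ι3]
    refine ⟨?_, by omega, by omega⟩
    rw [ι_add]
    conv_rhs => rw [eq_ι m]
    have e1' : p 0 + q 0 = m 0 := hc0
    have e2' : p 1 - i + (q 1 - j) = m 1 := by omega
    have e3' : p 2 + i + (q 2 + j) = m 2 := by omega
    have e4' : p 3 + q 3 = m 3 := by omega
    rw [e1', e2', e3', e4']
  · -- injectivity
    rintro ⟨k₁, ⟨⟨p₁, q₁⟩, ⟨i₁, j₁⟩⟩⟩ h₁ hne₁ ⟨k₂, ⟨⟨p₂, q₂⟩, ⟨i₂, j₂⟩⟩⟩ h₂ hne₂ heq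
    simp only [Finset.mem_sigma, Finset.mem_range, Finset.HasAntidiagonal.mem_antidiagonal] at h₁ h₂
    obtain ⟨hk₁, hpq₁, hij₁⟩ := h₁
    obtain ⟨hk₂, hpq₂, hij₂⟩ := h₂
    have hip₁ : i₁ ≤ p₁ 1 := by
      by_contra hlt; push_neg at hlt; simp [Nat.choose_eq_zero_of_lt hlt] at hne₁
    have hjq₁ : j₁ ≤ q₁ 1 := by
      by_contra hlt; push_neg at hlt; simp [Nat.choose_eq_zero_of_lt hlt] at hne₁
    have hip₂ : i₂ ≤ p₂ 1 := by
      by_contra hlt; push_neg at hlt; simp [Nat.choose_eq_zero_of_lt hlt] at hne₂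
    have hjq₂ : j₂ ≤ q₂ 1 := by
      by_contra hlt; push_neg at hlt; simp [Nat.choose_eq_zero_of_lt hlt] at hne₂
    simp only [Sigma.mk.inj_iff, Prod.mk.injEq, heq_eq_eq] at heq
    obtain ⟨⟨hpe, hqe⟩, hie, hje⟩ := heq
    obtain ⟨a0, a1, a2, a3⟩ := ι_inj hpe
    obtain ⟨b0, b1, b2, b3⟩ := ι_inj hqe
    subst hie; subst hje
    have hp : p₁ = p₂ := by
      rw [eq_ι p₁, eq_ι p₂, a0, show p₁ 1 = p₂ 1 by omega, show p₁ 2 = p₂ 2 by omega, a3]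
    have hq : q₁ = q₂ := by
      rw [eq_ι q₁, eq_ι q₂, b0, show q₁ 1 = q₂ 1 by omega, show q₁ 2 = q₂ 2 by omega, b3]
    have hk : k₁ = k₂ := by omega
    subst hp; subst hq; subst hk
    rfl
  · -- surjectivity
    rintro ⟨⟨a, b⟩, ⟨i, j⟩⟩ hmem hne
    simp only [Finset.mem_sigma, Finset.HasAntidiagonal.mem_antidiagonal, Finset.mem_product,
      Finset.mem_range] at hmem
    obtain ⟨hab, hia, hjb⟩ := hmem
    have hc0 : a 0 + b 0 = m 0 := by simpa using DFunLike.congr_fun hab 0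
    have hc1 : a 1 + b 1 = m 1 := by simpa using DFunLike.congr_fun hab 1
    have hc2 : a 2 + b 2 = m 2 := by simpa using DFunLike.congr_fun hab 2
    have hc3 : a 3 + b 3 = m 3 := by simpa using DFunLike.congr_fun hab 3
    have hFb : F (ι (a 0) (a 1 + i) (a 2 - i) (a 3)) ≠ 0 := by
      intro h; exact hne (by simp [h])
    have hGb : G (ι (b 0) (b 1 + j) (b 2 - j) (b 3)) ≠ 0 := by
      intro h; exact hne (by simp [h])
    refine ⟨⟨i + j, ⟨(ι (a 0) (a 1 + i) (a 2 - i) (a 3),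
        ι (b 0) (b 1 + j) (b 2 - j) (b 3)), (i, j)⟩⟩, ?_, ?_, ?_⟩
    · simp only [Finset.mem_sigma, Finset.mem_range, Finset.HasAntidiagonal.mem_antidiagonal]
      refine ⟨by omega, ?_, trivial⟩
      rw [ι_add]
      have e1' : a 0 + b 0 = m 0 := hc0
      have e2' : a 1 + i + (b 1 + j) = m 1 + (i + j) := by omega
      have e3' : a 2 - i + (b 2 - j) = m 2 - (i + j) := by omega
      rw [e1', e2', e3', hc3]
    · simp only [ι0, ι1, ι2, ι3]
      refine mul_ne_zero (mul_ne_zero ?_ ?_) (mul_ne_zero hFb hGb)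
      · exact Nat.cast_ne_zero.mpr (Nat.choose_pos (by omega)).ne'
      · exact Nat.cast_ne_zero.mpr (Nat.choose_pos (by omega)).ne'
    · have hA : ι (a 0) (a 1 + i - i) (a 2 - i + i) (a 3) = a := by
        rw [show a 1 + i - i = a 1 by omega, show a 2 - i + i = a 2 by omega]
        exact (eq_ι a).symm
      have hB : ι (b 0) (b 1 + j - j) (b 2 - j + j) (b 3) = b := by
        rw [show b 1 + j - j = b 1 by omega, show b 2 - j + j = b 2 by omega]
        exact (eq_ι b).symm
      simp only [ι0, ι1, ι2, ι3]
      rw [hA, hB]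
  · -- weights
    rintro ⟨k, ⟨⟨p, q⟩, ⟨i, j⟩⟩⟩ h₁ h₂
    simp only [Finset.mem_sigma, Finset.mem_range, Finset.HasAntidiagonal.mem_antidiagonal] at h₁
    obtain ⟨hk, hpq, hij⟩ := h₁
    have hip : i ≤ p 1 := by
      by_contra hlt; push_neg at hlt; simp [Nat.choose_eq_zero_of_lt hlt] at h₂
    have hjq : j ≤ q 1 := by
      by_contra hlt; push_neg at hlt; simp [Nat.choose_eq_zero_of_lt hlt] at h₂
    simp only [ι0, ι1, ι2, ι3]
    rw [show p 1 - i + i = p 1 by omega, show p 2 + i - i = p 2 by omega,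
        show q 1 - j + j = q 1 by omega, show q 2 + j - j = q 2 by omega]
    rw [show ι (p 0) (p 1) (p 2) (p 3) = p from (eq_ι p).symm,
        show ι (q 0) (q 1) (q 2) (q 3) = q from (eq_ι q).symm]
    rw [Nat.choose_symm hip, Nat.choose_symm hjq]
    ring
lemma substP2_add (F G : MvPowerSeries (Fin 4) ℚ) :
    substP2 (F + G) = substP2 F + substP2 G := by
  funext m
  have h : (substP2 F + substP2 G) m = substP2 F m + substP2 G m := rfl
  have h2 : ∀ n : Fin 4 →₀ ℕ, (F + G) n = F n + G n := fun _ => rfl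
  rw [h, substP2_coeff, substP2_coeff, substP2_coeff, ← Finset.sum_add_distrib]
  exact Finset.sum_congr rfl fun k _ => by rw [h2]; ring

lemma substP2_sub (F G : MvPowerSeries (Fin 4) ℚ) :
    substP2 (F - G) = substP2 F - substP2 G := by
  funext m
  have h : (substP2 F - substP2 G) m = substP2 F m - substP2 G m := rfl
  have h2 : ∀ n : Fin 4 →₀ ℕ, (F - G) n = F n - G n := fun _ => rfl
  rw [h, substP2_coeff, substP2_coeff, substP2_coeff, ← Finset.sum_sub_distrib]
  exact Finset.sum_congr rfl fun k _ => by rw [h2]; ring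

lemma ι_zero : ι 0 0 0 0 = 0 := by
  ext x; fin_cases x <;> simp [ι]

lemma substP2_one : substP2 (1 : MvPowerSeries (Fin 4) ℚ) = 1 := by
  classical
  funext m
  have h1 : ∀ n : Fin 4 →₀ ℕ, (1 : MvPowerSeries (Fin 4) ℚ) n = if n = 0 then 1 else 0 :=
    fun n => MvPowerSeries.coeff_one n
  rw [substP2_coeff, h1]
  by_cases hm : m = 0
  · subst hm
    rw [if_pos rfl]
    simp only [Finsupp.coe_zero, Pi.zero_apply, zero_add, Nat.zero_sub]
    rw [Finset.sum_range_one, h1, if_pos (by simpa using ι_zero)]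
    simp
  · rw [if_neg hm]
    refine Finset.sum_eq_zero fun k hk => ?_
    rw [h1]
    have : ¬(ι (m 0) (m 1 + k) (m 2 - k) (m 3) = 0) := by
      intro h
      rw [← ι_zero] at h
      obtain ⟨e0', e1', e2', e3'⟩ := ι_inj h
      apply hm
      have hk' : k ≤ m 2 := by have := Finset.mem_range.mp hk; omega
      rw [eq_ι m, show m 0 = 0 from e0', show m 1 = 0 by omega, show m 2 = 0 by omega,
        show m 3 = 0 from e3', ι_zero]
    rw [if_neg this, mul_zero]

lemma substP2_two : substP2 (2 : MvPowerSeries (Fin 4) ℚ) = 2 := by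
  have : (2 : MvPowerSeries (Fin 4) ℚ) = 1 + 1 := by norm_num
  rw [this, substP2_add, substP2_one]

lemma substP2_X2 : substP2 (MvPowerSeries.X 2 : MvPowerSeries (Fin 4) ℚ) = MvPowerSeries.X 2 := by
  classical
  funext m
  have hX : ∀ n : Fin 4 →₀ ℕ, (MvPowerSeries.X 2 : MvPowerSeries (Fin 4) ℚ) n
      = if n = Finsupp.single 2 1 then 1 else 0 := fun n => MvPowerSeries.coeff_X n 2
  rw [substP2_coeff, hX]
  by_cases hm : m = Finsupp.single 2 1
  · subst hm
    rw [if_pos rfl]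
    have h0 : (Finsupp.single 2 1 : Fin 4 →₀ ℕ) 0 = 0 := by simp [Finsupp.single_apply]
    have h1 : (Finsupp.single 2 1 : Fin 4 →₀ ℕ) 1 = 0 := by simp [Finsupp.single_apply]
    have h2 : (Finsupp.single 2 1 : Fin 4 →₀ ℕ) 2 = 1 := by simp
    have h3 : (Finsupp.single 2 1 : Fin 4 →₀ ℕ) 3 = 0 := by simp [Finsupp.single_apply]
    rw [h0, h1, h2, h3]
    rw [Finset.sum_range_succ, Finset.sum_range_succ, Finset.sum_range_zero]
    rw [hX, hX]
    rw [if_pos (by rw [e2]), if_neg (by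
      intro h
      rw [e2] at h
      obtain ⟨_, hb, _, _⟩ := ι_inj h
      omega)]
    norm_num
  · rw [if_neg hm]
    refine Finset.sum_eq_zero fun k hk => ?_
    rw [hX]
    have : ¬(ι (m 0) (m 1 + k) (m 2 - k) (m 3) = Finsupp.single 2 1) := by
      intro h
      rw [e2] at h
      obtain ⟨e0', e1', e2', e3'⟩ := ι_inj h
      apply hm
      have hk' : k ≤ m 2 := by have := Finset.mem_range.mp hk; omega
      rw [eq_ι m, show m 0 = 0 from e0', show m 1 = 0 by omega, show m 2 = 1 by omega,
        show m 3 = 0 from e3', ← e2]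
    rw [if_neg this, mul_zero]

lemma e3' : (Finsupp.single 3 1 : Fin 4 →₀ ℕ) = ι 0 0 0 1 := by
  ext x; fin_cases x <;> simp [ι, Finsupp.single_apply]

lemma substP2_X3 : substP2 (MvPowerSeries.X 3 : MvPowerSeries (Fin 4) ℚ) = MvPowerSeries.X 3 := by
  classical
  funext m
  have hX : ∀ n : Fin 4 →₀ ℕ, (MvPowerSeries.X 3 : MvPowerSeries (Fin 4) ℚ) n
      = if n = Finsupp.single 3 1 then 1 else 0 := fun n => MvPowerSeries.coeff_X n 3
  rw [substP2_coeff, hX]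
  by_cases hm : m = Finsupp.single 3 1
  · subst hm
    rw [if_pos rfl]
    have h0 : (Finsupp.single 3 1 : Fin 4 →₀ ℕ) 0 = 0 := by simp [Finsupp.single_apply]
    have h1 : (Finsupp.single 3 1 : Fin 4 →₀ ℕ) 1 = 0 := by simp [Finsupp.single_apply]
    have h2 : (Finsupp.single 3 1 : Fin 4 →₀ ℕ) 2 = 0 := by simp [Finsupp.single_apply]
    have h3 : (Finsupp.single 3 1 : Fin 4 →₀ ℕ) 3 = 1 := by simp
    rw [h0, h1, h2, h3]
    rw [Finset.sum_range_succ, Finset.sum_range_zero]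
    rw [hX, if_pos (by rw [e3'])]
    norm_num
  · rw [if_neg hm]
    refine Finset.sum_eq_zero fun k hk => ?_
    rw [hX]
    have : ¬(ι (m 0) (m 1 + k) (m 2 - k) (m 3) = Finsupp.single 3 1) := by
      intro h
      rw [e3'] at h
      obtain ⟨e0', e1', e2', e3''⟩ := ι_inj h
      apply hm
      have hk' : k ≤ m 2 := by have := Finset.mem_range.mp hk; omega
      rw [eq_ι m, show m 0 = 0 from e0', show m 1 = 0 by omega, show m 2 = 0 by omega,
        show m 3 = 1 from e3'', ← e3']
    rw [if_neg this, mul_zero]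

lemma e0 : (Finsupp.single 0 1 : Fin 4 →₀ ℕ) = ι 1 0 0 0 := by
  ext x; fin_cases x <;> simp [ι, Finsupp.single_apply]

lemma pd0_subst (F : MvPowerSeries (Fin 4) ℚ) :
    pd 0 (substP2 F) = substP2 (pd 0 F) := by
  funext m
  rw [pd_coeff, substP2_coeff, substP2_coeff, Finset.mul_sum]
  have h : m + Finsupp.single 0 1 = ι (m 0 + 1) (m 1) (m 2) (m 3) := by
    rw [eq_ι m, e0, ι_add]; simp
  rw [h]
  refine Finset.sum_congr (by simp) fun k hk => ?_
  rw [pd_coeff]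
  have h2 : ι (m 0) (m 1 + k) (m 2 - k) (m 3) + Finsupp.single 0 1
      = ι (m 0 + 1) (m 1 + k) (m 2 - k) (m 3) := by rw [e0, ι_add]; simp
  rw [h2]
  simp only [ι0, ι1, ι2, ι3]
  ring

lemma pd3_subst (F : MvPowerSeries (Fin 4) ℚ) :
    pd 3 (substP2 F) = substP2 (pd 3 F) := by
  funext m
  rw [pd_coeff, substP2_coeff, substP2_coeff, Finset.mul_sum]
  have h : m + Finsupp.single 3 1 = ι (m 0) (m 1) (m 2) (m 3 + 1) := by
    rw [eq_ι m, e3', ι_add]; simp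
  rw [h]
  refine Finset.sum_congr (by simp) fun k hk => ?_
  rw [pd_coeff]
  have h2 : ι (m 0) (m 1 + k) (m 2 - k) (m 3) + Finsupp.single 3 1
      = ι (m 0) (m 1 + k) (m 2 - k) (m 3 + 1) := by rw [e3', ι_add]; simp
  rw [h2]
  simp only [ι0, ι1, ι2, ι3]
  ring

lemma substP2_X2sq :
    substP2 (MvPowerSeries.X 2 ^ 2 : MvPowerSeries (Fin 4) ℚ) = MvPowerSeries.X 2 ^ 2 := by
  rw [pow_two, substP2_mul, substP2_X2, ← pow_two]

/-- The operator `L = ∂/∂s + 2v ∂/∂u` on `ℚ[[s,u,v,w]]` (variables `s,u,v,w = 0,1,2,3`). -/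
noncomputable def Lop (F : MvPowerSeries (Fin 4) ℚ) : MvPowerSeries (Fin 4) ℚ :=
  pd 0 F + 2 * MvPowerSeries.X 2 * pd 1 F

/-- The operator `P = 2v ∂/∂s + (2v²+2w) ∂/∂u` on `ℚ[[s,u,v,w]]`. -/
noncomputable def Pop (F : MvPowerSeries (Fin 4) ℚ) : MvPowerSeries (Fin 4) ℚ :=
  2 * MvPowerSeries.X 2 * pd 0 F +
    (2 * MvPowerSeries.X 2 ^ 2 + 2 * MvPowerSeries.X 3) * pd 1 F

/-- Let `Γ, Q¹ ∈ ℚ[[x₁,x₂,y₁,y₂]]`, `G = Γ(s,u+v,v,w)`.  Assume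
(i) `Q¹_{x₁x₁} = Γ_{x₂y₁} − 2Γ_{y₂x₁} + Γ_{x₁}Γ_{x₂x₁x₁}
  + (Γ_{y₁x₁} + Γ_{x₂})(Γ_{x₁x₁x₁} + 2y₁Γ_{x₂x₁x₁})
  + Γ_{y₁x₂}(2y₁Γ_{x₁x₁x₁} + (2y₁²+2y₂)Γ_{x₂x₁x₁})`
(the specialisation to `X = ℙ²`, `k = 1`, `i = j = 1` of Proposition 2.3), and
(ii) `G_{wss} = G_{uu} + G_{us}(L G_{ss}) + G_{uu}(P G_{ss})` (equation (11) of the paper).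
Then, after substitution,
`Q¹_{x₁x₁} = G_{vu} − 2G_{ws} − G_{wss} + G_sG_{uss} + G_u(L G_{ss}) + G_{vs}(L G_{ss})
  + G_{vu}(P G_{ss})`.  This is the paper's Equation (Q1forP2). -/
theorem Q1_potential_P2
    (Γ Q1 : MvPowerSeries (Fin 4) ℚ)
    (G : MvPowerSeries (Fin 4) ℚ) (hG : G = substP2 Γ)
    (h1 : pd 0 (pd 0 Q1) =
      pd 2 (pd 1 Γ) - 2 * pd 0 (pd 3 Γ) + pd 0 Γ * pd 0 (pd 0 (pd 1 Γ))
        + (pd 0 (pd 2 Γ) + pd 1 Γ) *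
            (pd 0 (pd 0 (pd 0 Γ)) + 2 * MvPowerSeries.X 2 * pd 0 (pd 0 (pd 1 Γ)))
        + pd 1 (pd 2 Γ) *
            (2 * MvPowerSeries.X 2 * pd 0 (pd 0 (pd 0 Γ)) +
              (2 * MvPowerSeries.X 2 ^ 2 + 2 * MvPowerSeries.X 3) * pd 0 (pd 0 (pd 1 Γ))))
    (h2 : pd 3 (pd 0 (pd 0 G)) =
      pd 1 (pd 1 G) + pd 1 (pd 0 G) * Lop (pd 0 (pd 0 G))
        + pd 1 (pd 1 G) * Pop (pd 0 (pd 0 G))) :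
    substP2 (pd 0 (pd 0 Q1)) =
      pd 2 (pd 1 G) - 2 * pd 3 (pd 0 G) - pd 3 (pd 0 (pd 0 G))
        + pd 0 G * pd 1 (pd 0 (pd 0 G)) + pd 1 G * Lop (pd 0 (pd 0 G))
        + pd 2 (pd 0 G) * Lop (pd 0 (pd 0 G)) + pd 2 (pd 1 G) * Pop (pd 0 (pd 0 G)) := by
  subst hG
  simp only [Lop, Pop, pd0_subst, pd1_subst, pd3_subst, pd2_subst] at h2 ⊢
  rw [h1]
  simp only [substP2_add, substP2_sub, substP2_mul, substP2_two, substP2_X2,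
    substP2_X2sq, substP2_X3]
  rw [h2]
  have c1 : pd 0 (pd 3 Γ) = pd 3 (pd 0 Γ) := pd_comm 0 3 Γ
  have c2 : pd 1 (pd 0 (pd 0 Γ)) = pd 0 (pd 0 (pd 1 Γ)) := by
    rw [pd_comm 1 0, pd_comm 1 0]
  have c3 : pd 2 (pd 0 Γ) = pd 0 (pd 2 Γ) := pd_comm 2 0 Γ
  have c4 : pd 2 (pd 1 Γ) = pd 1 (pd 2 Γ) := pd_comm 2 1 Γ
  rw [c1, c2, c3, c4]
  ring
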